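/- arXiv:1511.08050 — 3 statements merged into one kernel-verified Lean document; each statement's English description precedes it below -/
import Mathlib

section
/- Let T : D → D' be a C² diffeomorphism, (E, H) a C¹ solution of the time-harmonic Maxwell system ∇×E = ik μ H, ∇×H = −ik ε E + j in D. Define E'(T(x)) = ∇T(x)^{−T} E(x), H'(T(x)) = ∇T(x)^{−T} H(x), ε' = T_*ε, μ' = T_*μ, j'(T(x)) = ∇T(x) j(x)/det ∇T(x). Then ∇'×E' = ik μ' H' and ∇'×H' = −ik ε' E' + j' in D'. -/
open Matrix

/-- Partial derivative `∂ᵢ f` of a complex-valued function on `ℝ³`. -/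
noncomputable def pdC (i : Fin 3) (f : (Fin 3 → ℝ) → ℂ) (x : Fin 3 → ℝ) : ℂ :=
  fderiv ℝ f x (Pi.single i 1)

/-- The curl `∇ × H` of a complex vector field `H : ℝ³ → ℂ³`. -/
noncomputable def curlC (H : (Fin 3 → ℝ) → Fin 3 → ℂ) (x : Fin 3 → ℝ) : Fin 3 → ℂ :=
  ![pdC 1 (fun y => H y 2) x - pdC 2 (fun y => H y 1) x,
    pdC 2 (fun y => H y 0) x - pdC 0 (fun y => H y 2) x,
    pdC 0 (fun y => H y 1) x - pdC 1 (fun y => H y 0) x]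

theorem fderiv_comp_proj (W : (Fin 3 → ℝ) → Fin 3 → ℂ) (z : Fin 3 → ℝ)
    (hW : DifferentiableAt ℝ W z) (q : Fin 3) (v : Fin 3 → ℝ) :
    fderiv ℝ (fun y => W y q) z v = fderiv ℝ W z v q := by
  have h1 := ((ContinuousLinearMap.proj (R := ℝ) (φ := fun _ : Fin 3 => ℂ) q).hasFDerivAt).comp z
    hW.hasFDerivAt
  rw [show (fun y => W y q) =
    (⇑(ContinuousLinearMap.proj (R := ℝ) (φ := fun _ : Fin 3 => ℂ) q) ∘ W) from rfl, h1.fderiv]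
  rfl

theorem det_map_ofReal (M : Matrix (Fin 3) (Fin 3) ℝ) :
    ((M.map Complex.ofReal)).det = (M.det : ℂ) := by
  have := RingHom.map_det Complex.ofRealHom M
  exact this.symm

theorem curl_transform (D : Set (Fin 3 → ℝ)) (hD : IsOpen D)
    (T : (Fin 3 → ℝ) → (Fin 3 → ℝ)) (hT2 : ContDiffOn ℝ 2 T D)
    (J : (Fin 3 → ℝ) → Matrix (Fin 3) (Fin 3) ℝ)
    (hJ : ∀ x ∈ D, ∀ i j : Fin 3, J x i j = fderiv ℝ T x (Pi.single j 1) i)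
    (hJdet : ∀ x ∈ D, IsUnit (J x).det)
    (E F : (Fin 3 → ℝ) → Fin 3 → ℂ)
    (x₀ : Fin 3 → ℝ) (hx₀ : x₀ ∈ D)
    (hEd : DifferentiableAt ℝ E x₀)
    (hFd : DifferentiableAt ℝ F (T x₀))
    (hrel : ∀ x ∈ D, F (T x) = ((((J x).map Complex.ofReal)ᵀ)⁻¹).mulVec (E x)) :
    curlC F (T x₀) = (((J x₀).det : ℂ))⁻¹ • ((J x₀).map Complex.ofReal).mulVec (curlC E x₀) := by
  have hDn : D ∈ nhds x₀ := hD.mem_nhds hx₀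
  have hTat : ContDiffAt ℝ 2 T x₀ := hT2.contDiffAt hDn
  have hTd : DifferentiableAt ℝ T x₀ := hTat.differentiableAt (by norm_num)
  have hΦ : ContDiffAt ℝ 1 (fderiv ℝ T) x₀ := hTat.fderiv_right (by norm_num)
  have hΦd : DifferentiableAt ℝ (fderiv ℝ T) x₀ := hΦ.differentiableAt one_ne_zero
  have hsymm : IsSymmSndFDerivAt ℝ T x₀ := hTat.isSymmSndFDerivAt (by norm_num)
  have hdetne : ((J x₀).det : ℂ) ≠ 0 := by
    simpa [Complex.ofReal_ne_zero] using (hJdet x₀ hx₀).ne_zero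
  -- decomposition of directional derivative of T
  have hTder : ∀ m : Fin 3, fderiv ℝ T x₀ (Pi.single m 1)
      = J x₀ 0 m • (Pi.single 0 1 : Fin 3 → ℝ) + J x₀ 1 m • (Pi.single 1 1 : Fin 3 → ℝ)
        + J x₀ 2 m • (Pi.single 2 1 : Fin 3 → ℝ) := by
    intro m; funext i
    fin_cases i <;>
      simp [Pi.single_apply, ← hJ x₀ hx₀]
  -- master equation
  have hmaster : ∀ r m : Fin 3,
      fderiv ℝ (fun x => E x r) x₀ (Pi.single m 1)
      = F (T x₀) 0 * ((fderiv ℝ (fderiv ℝ T) x₀ (Pi.single m 1) (Pi.single r 1) 0 : ℝ) : ℂ)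
      + F (T x₀) 1 * ((fderiv ℝ (fderiv ℝ T) x₀ (Pi.single m 1) (Pi.single r 1) 1 : ℝ) : ℂ)
      + F (T x₀) 2 * ((fderiv ℝ (fderiv ℝ T) x₀ (Pi.single m 1) (Pi.single r 1) 2 : ℝ) : ℂ)
      + ((J x₀ 0 r : ℝ) : ℂ) * (((J x₀ 0 m : ℝ) : ℂ) * fderiv ℝ F (T x₀) (Pi.single 0 1) 0
          + ((J x₀ 1 m : ℝ) : ℂ) * fderiv ℝ F (T x₀) (Pi.single 1 1) 0
          + ((J x₀ 2 m : ℝ) : ℂ) * fderiv ℝ F (T x₀) (Pi.single 2 1) 0)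
      + ((J x₀ 1 r : ℝ) : ℂ) * (((J x₀ 0 m : ℝ) : ℂ) * fderiv ℝ F (T x₀) (Pi.single 0 1) 1
          + ((J x₀ 1 m : ℝ) : ℂ) * fderiv ℝ F (T x₀) (Pi.single 1 1) 1
          + ((J x₀ 2 m : ℝ) : ℂ) * fderiv ℝ F (T x₀) (Pi.single 2 1) 1)
      + ((J x₀ 2 r : ℝ) : ℂ) * (((J x₀ 0 m : ℝ) : ℂ) * fderiv ℝ F (T x₀) (Pi.single 0 1) 2
          + ((J x₀ 1 m : ℝ) : ℂ) * fderiv ℝ F (T x₀) (Pi.single 1 1) 2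
          + ((J x₀ 2 m : ℝ) : ℂ) * fderiv ℝ F (T x₀) (Pi.single 2 1) 2) := by
    intro r m
    have heq : (fun x => E x r) =ᶠ[nhds x₀] fun x =>
        Complex.ofReal (fderiv ℝ T x (Pi.single r 1) 0) * F (T x) 0
        + Complex.ofReal (fderiv ℝ T x (Pi.single r 1) 1) * F (T x) 1
        + Complex.ofReal (fderiv ℝ T x (Pi.single r 1) 2) * F (T x) 2 := by
      filter_upwards [hDn] with x hx
      have hdetx : IsUnit (((J x).map Complex.ofReal)ᵀ).det := by
        rw [Matrix.det_transpose, det_map_ofReal]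
        exact isUnit_iff_ne_zero.mpr (by
          simpa [Complex.ofReal_ne_zero] using (hJdet x hx).ne_zero)
      have h2 : E x = (((J x).map Complex.ofReal)ᵀ).mulVec (F (T x)) := by
        rw [hrel x hx, Matrix.mulVec_mulVec, Matrix.mul_nonsing_inv _ hdetx, Matrix.one_mulVec]
      have h3 := congrFun h2 r
      rw [h3]
      simp [Matrix.mulVec, dotProduct, Fin.sum_univ_three, Matrix.transpose_apply,
        Matrix.map_apply, hJ x hx]
    have hbq : ∀ q : Fin 3, HasFDerivAt (fun x => F (T x) q)
        ((ContinuousLinearMap.proj (R := ℝ) (φ := fun _ : Fin 3 => ℂ) q).comp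
          ((fderiv ℝ F (T x₀)).comp (fderiv ℝ T x₀))) x₀ := by
      intro q
      have h1 : HasFDerivAt (fun x => F (T x)) ((fderiv ℝ F (T x₀)).comp (fderiv ℝ T x₀)) x₀ :=
        hFd.hasFDerivAt.comp x₀ hTd.hasFDerivAt
      exact (ContinuousLinearMap.proj q).hasFDerivAt.comp x₀ h1
    have hcq : ∀ q : Fin 3, HasFDerivAt
        (fun x => Complex.ofReal (fderiv ℝ T x (Pi.single r 1) q))
        (Complex.ofRealCLM.comp
          ((ContinuousLinearMap.proj (R := ℝ) (φ := fun _ : Fin 3 => ℝ) q).comp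
            ((ContinuousLinearMap.apply ℝ (Fin 3 → ℝ) (Pi.single r 1)).comp
              (fderiv ℝ (fderiv ℝ T) x₀)))) x₀ := by
      intro q
      have h1a := (ContinuousLinearMap.apply ℝ (Fin 3 → ℝ) (Pi.single r 1)).hasFDerivAt
        (x := fderiv ℝ T x₀) |>.comp x₀ hΦd.hasFDerivAt
      have h1 : HasFDerivAt (fun x => fderiv ℝ T x (Pi.single r 1))
          ((ContinuousLinearMap.apply ℝ (Fin 3 → ℝ) (Pi.single r 1)).comp
            (fderiv ℝ (fderiv ℝ T) x₀)) x₀ := h1a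
      have h2a := (ContinuousLinearMap.proj (R := ℝ) (φ := fun _ : Fin 3 => ℝ) q).hasFDerivAt
        (x := fderiv ℝ T x₀ (Pi.single r 1)) |>.comp x₀ h1
      have h2 : HasFDerivAt (fun x => fderiv ℝ T x (Pi.single r 1) q)
          ((ContinuousLinearMap.proj (R := ℝ) (φ := fun _ : Fin 3 => ℝ) q).comp
            ((ContinuousLinearMap.apply ℝ (Fin 3 → ℝ) (Pi.single r 1)).comp
              (fderiv ℝ (fderiv ℝ T) x₀))) x₀ := h2a
      exact Complex.ofRealCLM.hasFDerivAt.comp x₀ h2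
    have htot := (((hcq 0).mul (hbq 0)).add ((hcq 1).mul (hbq 1))).add ((hcq 2).mul (hbq 2))
    have htot' : HasFDerivAt (fun x =>
        Complex.ofReal (fderiv ℝ T x (Pi.single r 1) 0) * F (T x) 0
        + Complex.ofReal (fderiv ℝ T x (Pi.single r 1) 1) * F (T x) 1
        + Complex.ofReal (fderiv ℝ T x (Pi.single r 1) 2) * F (T x) 2) _ x₀ := htot
    rw [heq.fderiv_eq, htot'.fderiv]
    simp only [ContinuousLinearMap.add_apply, ContinuousLinearMap.smul_apply,
      ContinuousLinearMap.comp_apply, ContinuousLinearMap.proj_apply,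
      ContinuousLinearMap.apply_apply, Complex.ofRealCLM_apply, smul_eq_mul]
    rw [hTder m]
    simp only [map_add, _root_.map_smul, Pi.add_apply, Pi.smul_apply, Complex.real_smul]
    simp only [← hJ x₀ hx₀]
    ring
  have hsym1 : ∀ q : Fin 3, fderiv ℝ (fderiv ℝ T) x₀ (Pi.single 2 1) (Pi.single 1 1) q
      = fderiv ℝ (fderiv ℝ T) x₀ (Pi.single 1 1) (Pi.single 2 1) q :=
    fun q => congrFun (hsymm (Pi.single 2 1) (Pi.single 1 1)) q
  have hsym2 : ∀ q : Fin 3, fderiv ℝ (fderiv ℝ T) x₀ (Pi.single 2 1) (Pi.single 0 1) q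
      = fderiv ℝ (fderiv ℝ T) x₀ (Pi.single 0 1) (Pi.single 2 1) q :=
    fun q => congrFun (hsymm (Pi.single 2 1) (Pi.single 0 1)) q
  have hsym3 : ∀ q : Fin 3, fderiv ℝ (fderiv ℝ T) x₀ (Pi.single 1 1) (Pi.single 0 1) q
      = fderiv ℝ (fderiv ℝ T) x₀ (Pi.single 0 1) (Pi.single 1 1) q :=
    fun q => congrFun (hsymm (Pi.single 1 1) (Pi.single 0 1)) q
  funext i
  fin_cases i <;>
  · simp [curlC, pdC, Matrix.mulVec, dotProduct, Fin.sum_univ_three,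
      Matrix.map_apply]
    simp only [fderiv_comp_proj F (T x₀) hFd]
    simp only [hmaster]
    simp only [hsym1, hsym2, hsym3]
    rw [inv_mul_eq_div, eq_div_iff hdetne, Matrix.det_fin_three]
    push_cast
    ring


/-- Invariance of the time-harmonic Maxwell system under a change of variables `T`:
if `(E, H)` solves Maxwell's equations with coefficients `(ε, μ)` and source `j` in `D`,
then the push-forwards `(E', H')` solve Maxwell's equations with coefficients
`(T_*ε, T_*μ)` and source `T_*j` in `D' = T(D)`. -/
theorem stmt_15 (D D' : Set (Fin 3 → ℝ)) (hD : IsOpen D) (hD' : IsOpen D') (k : ℝ)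
    (hk : 0 < k)
    (T : (Fin 3 → ℝ) → (Fin 3 → ℝ)) (hT : Set.BijOn T D D')
    (hT2 : ContDiffOn ℝ 2 T D)
    (J : (Fin 3 → ℝ) → Matrix (Fin 3) (Fin 3) ℝ)
    (hJ : ∀ x ∈ D, ∀ i j : Fin 3, J x i j = fderiv ℝ T x (Pi.single j 1) i)
    (hJdet : ∀ x ∈ D, IsUnit (J x).det)
    (ε μ ε' μ' : (Fin 3 → ℝ) → Matrix (Fin 3) (Fin 3) ℂ)
    (E H E' H' j j' : (Fin 3 → ℝ) → Fin 3 → ℂ)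
    (hE : ContDiffOn ℝ 1 E D) (hHsm : ContDiffOn ℝ 1 H D)
    (hE' : ContDiffOn ℝ 1 E' D') (hH' : ContDiffOn ℝ 1 H' D')
    (hME : ∀ x ∈ D, curlC E x = (Complex.I * k) • (μ x).mulVec (H x))
    (hMH : ∀ x ∈ D, curlC H x = (-(Complex.I * k)) • (ε x).mulVec (E x) + j x)
    (hε' : ∀ x ∈ D, ε' (T x) =
      (((J x).det : ℂ))⁻¹ • ((J x).map Complex.ofReal * ε x * ((J x).map Complex.ofReal)ᵀ))
    (hμ' : ∀ x ∈ D, μ' (T x) =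
      (((J x).det : ℂ))⁻¹ • ((J x).map Complex.ofReal * μ x * ((J x).map Complex.ofReal)ᵀ))
    (hj' : ∀ x ∈ D, j' (T x) = (((J x).det : ℂ))⁻¹ • ((J x).map Complex.ofReal).mulVec (j x))
    (hE'def : ∀ x ∈ D, E' (T x) = ((((J x).map Complex.ofReal)ᵀ)⁻¹).mulVec (E x))
    (hH'def : ∀ x ∈ D, H' (T x) = ((((J x).map Complex.ofReal)ᵀ)⁻¹).mulVec (H x)) :
    ∀ x ∈ D,
      curlC E' (T x) = (Complex.I * k) • (μ' (T x)).mulVec (H' (T x)) ∧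
      curlC H' (T x) = (-(Complex.I * k)) • (ε' (T x)).mulVec (E' (T x)) + j' (T x) := by
  intro x hx
  have hxD' : T x ∈ D' := hT.mapsTo hx
  have hEd : DifferentiableAt ℝ E x :=
    ((hE.differentiableOn one_ne_zero) x hx).differentiableAt (hD.mem_nhds hx)
  have hHd : DifferentiableAt ℝ H x :=
    ((hHsm.differentiableOn one_ne_zero) x hx).differentiableAt (hD.mem_nhds hx)
  have hE'd : DifferentiableAt ℝ E' (T x) :=
    ((hE'.differentiableOn one_ne_zero) _ hxD').differentiableAt (hD'.mem_nhds hxD')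
  have hH'd : DifferentiableAt ℝ H' (T x) :=
    ((hH'.differentiableOn one_ne_zero) _ hxD').differentiableAt (hD'.mem_nhds hxD')
  have hdetc : IsUnit ((((J x).map Complex.ofReal)ᵀ).det) := by
    rw [Matrix.det_transpose, det_map_ofReal]
    exact isUnit_iff_ne_zero.mpr (by
      simpa [Complex.ofReal_ne_zero] using (hJdet x hx).ne_zero)
  have hcE := curl_transform D hD T hT2 J hJ hJdet E E' x hx hEd hE'd hE'def
  have hcH := curl_transform D hD T hT2 J hJ hJdet H H' x hx hHd hH'd hH'def
  have hcollapse : ∀ M : Matrix (Fin 3) (Fin 3) ℂ,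
      (J x).map Complex.ofReal * M * ((J x).map Complex.ofReal)ᵀ
        * ((((J x).map Complex.ofReal)ᵀ)⁻¹) = (J x).map Complex.ofReal * M := by
    intro M
    rw [mul_assoc ((J x).map Complex.ofReal * M), Matrix.mul_nonsing_inv _ hdetc, mul_one]
  constructor
  · rw [hcE, hME x hx, hμ' x hx, hH'def x hx]
    simp only [Matrix.mulVec_smul, Matrix.smul_mulVec, Matrix.mulVec_mulVec,
      smul_mul_assoc]
    rw [hcollapse, smul_comm]
  · rw [hcH, hMH x hx, hε' x hx, hE'def x hx, hj' x hx]
    simp only [Matrix.mulVec_add, Matrix.mulVec_smul, Matrix.smul_mulVec,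
      Matrix.mulVec_mulVec, smul_add, smul_mul_assoc]
    rw [hcollapse, smul_comm]
end

section
/- Let m > 1, r_0 > 0, α, β > 1 with αβ − α − β = 0, r_2 = m r_0, r_3 = m^{2−1/α} r_0, F(x) = r_2^α x/|x|^α and G(x) = r_3^β x/|x|^β. If ε = μ = m·I on B_{r_1} \ B_{r_0} (with r_1 = m^{1−1/α} r_0), then (G_*F_* ε, G_*F_* μ) = (I, I) on the image G(F(B_{r_1} \ B_{r_0})) = B_{r_3} \ B_{r_2}. -/
open Matrix

open scoped RealInnerProductSpace

local notation "E3" => EuclideanSpace ℝ (Fin 3)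

theorem aux_hasFDerivAt (c γ : ℝ) (x : E3) (hx : x ≠ 0) :
    HasFDerivAt (fun y : E3 => (c / ‖y‖ ^ γ) • y)
      ((c / ‖x‖ ^ γ) • ContinuousLinearMap.id ℝ E3
        - (c * γ / ‖x‖ ^ (γ + 2)) • (innerSL ℝ x).smulRight x) x := by
  have hn : (0:ℝ) < ‖x‖ := norm_pos_iff.mpr hx
  have hinner : HasFDerivAt (fun y : E3 => ⟪y, y⟫)
      ((fderivInnerCLM ℝ (x, x)).comp
        ((ContinuousLinearMap.id ℝ E3).prod (ContinuousLinearMap.id ℝ E3))) x :=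
    (hasFDerivAt_id x).inner ℝ (hasFDerivAt_id x)
  have hne : ⟪x, x⟫ ≠ 0 := by
    rw [real_inner_self_eq_norm_sq]; positivity
  have hpow := hinner.rpow_const (p := -(γ/2)) (Or.inl hne)
  have hsmul := (hpow.const_mul c).smul (hasFDerivAt_id x)
  have heq : (fun y : E3 => (c / ‖y‖ ^ γ) • y)
      =ᶠ[nhds x] (fun y : E3 => (c * ⟪y, y⟫ ^ (-(γ/2))) • y) := by
    filter_upwards [eventually_ne_nhds hx] with y hy
    have hny : (0:ℝ) < ‖y‖ := norm_pos_iff.mpr hy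
    congr 1
    rw [real_inner_self_eq_norm_sq, ← Real.rpow_natCast ‖y‖ 2,
      ← Real.rpow_mul (norm_nonneg y)]
    have : ((2:ℕ):ℝ) * (-(γ/2)) = -γ := by push_cast; ring
    rw [this, Real.rpow_neg (norm_nonneg y), div_eq_mul_inv]
  have hmain := hsmul.congr_of_eventuallyEq heq
  refine hmain.congr_fderiv (Eq.symm ?_)
  have h2 : (⟪x, x⟫) ^ (-(γ/2)) = (‖x‖ ^ γ)⁻¹ := by
    rw [real_inner_self_eq_norm_sq, ← Real.rpow_natCast ‖x‖ 2,
      ← Real.rpow_mul (norm_nonneg x)]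
    have : ((2:ℕ):ℝ) * (-(γ/2)) = -γ := by push_cast; ring
    rw [this, Real.rpow_neg (norm_nonneg x)]
  have h3 : (⟪x, x⟫) ^ (-(γ/2) - 1) = (‖x‖ ^ (γ+2))⁻¹ := by
    rw [real_inner_self_eq_norm_sq, ← Real.rpow_natCast ‖x‖ 2,
      ← Real.rpow_mul (norm_nonneg x)]
    have : ((2:ℕ):ℝ) * (-(γ/2) - 1) = -(γ+2) := by push_cast; ring
    rw [this, Real.rpow_neg (norm_nonneg x)]
  refine ContinuousLinearMap.ext fun v => ?_
  simp only [ContinuousLinearMap.sub_apply, ContinuousLinearMap.add_apply,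
    ContinuousLinearMap.smul_apply, ContinuousLinearMap.id_apply,
    ContinuousLinearMap.smulRight_apply, innerSL_apply_apply,
    ContinuousLinearMap.coe_smul', Pi.smul_apply,
    ContinuousLinearMap.comp_apply, ContinuousLinearMap.prod_apply,
    fderivInnerCLM_apply, smul_eq_mul, h2, h3]
  rw [real_inner_comm v x]
  simp only [id_eq]
  match_scalars
  · field_simp
  · field_simp
    ring

theorem aux_jac (c γ : ℝ) (Φ : E3 → E3)
    (hΦ : ∀ y : E3, y ≠ 0 → Φ y = (c / ‖y‖ ^ γ) • y)
    (J : E3 → Matrix (Fin 3) (Fin 3) ℝ)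
    (hJ : ∀ y : E3, y ≠ 0 → ∀ i j : Fin 3,
      J y i j = fderiv ℝ Φ y (EuclideanSpace.single j 1) i)
    (z : E3) (hz : z ≠ 0) :
    J z = (c / ‖z‖ ^ γ) •
      ((1 : Matrix (Fin 3) (Fin 3) ℝ) - (γ / ‖z‖ ^ 2) • Matrix.vecMulVec (⇑z) (⇑z)) := by
  have hn : (0:ℝ) < ‖z‖ := norm_pos_iff.mpr hz
  have hD : HasFDerivAt Φ
      ((c / ‖z‖ ^ γ) • ContinuousLinearMap.id ℝ E3
        - (c * γ / ‖z‖ ^ (γ + 2)) • (innerSL ℝ z).smulRight z) z := by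
    refine (aux_hasFDerivAt c γ z hz).congr_of_eventuallyEq ?_
    filter_upwards [eventually_ne_nhds hz] with y hy
    exact hΦ y hy
  have hsplit : ‖z‖ ^ (γ + 2) = ‖z‖ ^ γ * ‖z‖ ^ 2 := by
    rw [Real.rpow_add hn, Real.rpow_two]
  ext i j
  rw [hJ z hz i j, hD.fderiv]
  simp only [ContinuousLinearMap.sub_apply, ContinuousLinearMap.smul_apply,
    ContinuousLinearMap.id_apply, ContinuousLinearMap.smulRight_apply, innerSL_apply_apply,
    PiLp.sub_apply, PiLp.smul_apply, smul_eq_mul, Matrix.smul_apply, Matrix.sub_apply,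
    Matrix.one_apply, Matrix.vecMulVec_apply, EuclideanSpace.single_apply,
    EuclideanSpace.inner_single_right, RCLike.star_def, conj_trivial, mul_one]
  have h2 : (‖z‖:ℝ) ^ 2 ≠ 0 := by positivity
  have hγ : (‖z‖:ℝ) ^ γ ≠ 0 := by positivity
  rcases eq_or_ne i j with h | h
  · subst h
    simp only [if_pos rfl, hsplit]
    field_simp
  · simp only [if_neg h, if_neg (Ne.symm h), hsplit]
    field_simp


set_option maxHeartbeats 1000000

/-- For the superlensing construction, `(G_* F_* (m I), G_* F_* (m I)) = (I, I)` on
`B_{r₃} \ B_{r₂}`, the image of `B_{r₁} \ B_{r₀}` under `G ∘ F`. -/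
theorem stmt_16 (m r₀ α β r₁ r₂ r₃ : ℝ) (hm : 1 < m) (hr₀ : 0 < r₀)
    (hα : 1 < α) (hβ : 1 < β) (hab : α * β - α - β = 0)
    (h1 : r₁ = m ^ (1 - 1/α) * r₀) (h2 : r₂ = m * r₀) (h3 : r₃ = m ^ (2 - 1/α) * r₀)
    (F G : EuclideanSpace ℝ (Fin 3) → EuclideanSpace ℝ (Fin 3))
    (hF : ∀ x : EuclideanSpace ℝ (Fin 3), x ≠ 0 → F x = (r₂ ^ α / ‖x‖ ^ α) • x)
    (hG : ∀ y : EuclideanSpace ℝ (Fin 3), y ≠ 0 → G y = (r₃ ^ β / ‖y‖ ^ β) • y)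
    (JF JG : EuclideanSpace ℝ (Fin 3) → Matrix (Fin 3) (Fin 3) ℝ)
    (hJF : ∀ x : EuclideanSpace ℝ (Fin 3), x ≠ 0 → ∀ i j : Fin 3,
      JF x i j = fderiv ℝ F x (EuclideanSpace.single j 1) i)
    (hJG : ∀ y : EuclideanSpace ℝ (Fin 3), y ≠ 0 → ∀ i j : Fin 3,
      JG y i j = fderiv ℝ G y (EuclideanSpace.single j 1) i)
    (ε μ : EuclideanSpace ℝ (Fin 3) → Matrix (Fin 3) (Fin 3) ℝ)
    (hε : ∀ x : EuclideanSpace ℝ (Fin 3), r₀ < ‖x‖ → ‖x‖ < r₁ →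
      ε x = m • (1 : Matrix (Fin 3) (Fin 3) ℝ) ∧ μ x = m • (1 : Matrix (Fin 3) (Fin 3) ℝ)) :
    ∀ x : EuclideanSpace ℝ (Fin 3), r₀ < ‖x‖ → ‖x‖ < r₁ →
      (r₂ < ‖G (F x)‖ ∧ ‖G (F x)‖ < r₃) ∧
      ((JG (F x)).det)⁻¹ •
          (JG (F x) * (((JF x).det)⁻¹ • (JF x * ε x * (JF x)ᵀ)) * (JG (F x))ᵀ) =
        (1 : Matrix (Fin 3) (Fin 3) ℝ) ∧
      ((JG (F x)).det)⁻¹ •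
          (JG (F x) * (((JF x).det)⁻¹ • (JF x * μ x * (JF x)ᵀ)) * (JG (F x))ᵀ) =
        (1 : Matrix (Fin 3) (Fin 3) ℝ) := by
  intro x hx0 hx1
  have hm0 : (0:ℝ) < m := lt_trans one_pos hm
  have hα0 : (0:ℝ) < α := lt_trans one_pos hα
  have hαne : α ≠ 0 := ne_of_gt hα0
  have hn : (0:ℝ) < ‖x‖ := lt_trans hr₀ hx0
  have hxne : x ≠ 0 := by
    intro h; rw [h, norm_zero] at hn; exact lt_irrefl 0 hn
  have hr₂ : (0:ℝ) < r₂ := by rw [h2]; positivity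
  have hr₃ : (0:ℝ) < r₃ := by
    rw [h3]; exact mul_pos (Real.rpow_pos_of_pos hm0 _) hr₀
  obtain ⟨n, hndef⟩ : ∃ n : ℝ, n = ‖x‖ := ⟨_, rfl⟩
  rw [← hndef] at hx0 hx1 hn
  obtain ⟨s, hs⟩ : ∃ s : ℝ, s = r₂ ^ α / n ^ α := ⟨_, rfl⟩
  have hs0 : 0 < s := hs ▸ div_pos (Real.rpow_pos_of_pos hr₂ _) (Real.rpow_pos_of_pos hn _)
  have hFx : F x = s • x := by rw [hF x hxne, hs, hndef]
  have hFnorm : ‖F x‖ = s * n := by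
    rw [hFx, norm_smul, Real.norm_eq_abs, abs_of_pos hs0, ← hndef]
  have hFne : F x ≠ 0 := by
    rw [hFx]; exact smul_ne_zero (ne_of_gt hs0) hxne
  obtain ⟨s', hs'⟩ : ∃ s' : ℝ, s' = r₃ ^ β / ‖F x‖ ^ β := ⟨_, rfl⟩
  have hFn0 : (0:ℝ) < ‖F x‖ := norm_pos_iff.mpr hFne
  have hs'0 : 0 < s' := hs' ▸ div_pos (Real.rpow_pos_of_pos hr₃ _) (Real.rpow_pos_of_pos hFn0 _)
  have hGF : G (F x) = s' • F x := by rw [hG (F x) hFne, hs']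
  have hGFnorm : ‖G (F x)‖ = s' * (s * n) := by
    rw [hGF, norm_smul, Real.norm_eq_abs, abs_of_pos hs'0, hFnorm]
  -- the key scalar identity s * s' = m
  have hss' : s * s' = m := by
    have hls : Real.log s = α * Real.log r₂ - α * Real.log n := by
      rw [hs, Real.log_div (by positivity) (by positivity),
        Real.log_rpow hr₂, Real.log_rpow hn]
    have hls' : Real.log s' = β * Real.log r₃ - β * (Real.log s + Real.log n) := by
      rw [hs', Real.log_div (by positivity) (by positivity),
        Real.log_rpow hr₃, Real.log_rpow hFn0, hFnorm,
        Real.log_mul (ne_of_gt hs0) (ne_of_gt hn)]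
    have hlr₂ : Real.log r₂ = Real.log m + Real.log r₀ := by
      rw [h2, Real.log_mul (ne_of_gt hm0) (ne_of_gt hr₀)]
    have hlr₃ : Real.log r₃ = (2 - 1/α) * Real.log m + Real.log r₀ := by
      rw [h3, Real.log_mul (by positivity) (ne_of_gt hr₀), Real.log_rpow hm0]
    have hlog : Real.log (s * s') = Real.log m := by
      rw [Real.log_mul (ne_of_gt hs0) (ne_of_gt hs'0), hls', hls, hlr₂, hlr₃]
      field_simp
      linear_combination ((1-α)*Real.log m - α*Real.log r₀ + α*Real.log n) * hab
    calc s * s' = Real.exp (Real.log (s * s')) :=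
          (Real.exp_log (mul_pos hs0 hs'0)).symm
      _ = Real.exp (Real.log m) := by rw [hlog]
      _ = m := Real.exp_log hm0
  have hGFn : ‖G (F x)‖ = m * n := by
    rw [hGFnorm, ← mul_assoc, mul_comm s' s, hss']
  have hbound : r₂ < ‖G (F x)‖ ∧ ‖G (F x)‖ < r₃ := by
    constructor
    · rw [hGFn, h2]; exact mul_lt_mul_of_pos_left hx0 hm0
    · rw [hGFn]
      have h3' : r₃ = m * r₁ := by
        have he : (2 - 1/α : ℝ) = 1 + (1 - 1/α) := by ring
        rw [h3, he, Real.rpow_add hm0, Real.rpow_one, h1, mul_assoc]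
      rw [h3']; exact mul_lt_mul_of_pos_left hx1 hm0
  -- matrix part
  obtain ⟨u, hu⟩ : ∃ u : Fin 3 → ℝ, u = ⇑x := ⟨_, rfl⟩
  obtain ⟨Q, hQ⟩ : ∃ Q : Matrix (Fin 3) (Fin 3) ℝ, Q = Matrix.vecMulVec u u := ⟨_, rfl⟩
  have hsum : u 0 * u 0 + u 1 * u 1 + u 2 * u 2 = n ^ 2 := by
    have h := real_inner_self_eq_norm_sq x
    rw [PiLp.inner_apply] at h
    rw [hu, hndef]
    simpa [RCLike.inner_apply, conj_trivial, Fin.sum_univ_three, sq] using h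
  have hQQ : Q * Q = (n ^ 2) • Q := by
    ext i j
    simp only [hQ, Matrix.mul_apply, Matrix.vecMulVec_apply, Fin.sum_univ_three,
      Matrix.smul_apply, smul_eq_mul]
    linear_combination (u i * u j) * hsum
  have hQT : Qᵀ = Q := by
    ext i j
    simp only [hQ, Matrix.transpose_apply, Matrix.vecMulVec_apply]
    ring
  have hn2 : (n:ℝ) ^ 2 ≠ 0 := by positivity
  obtain ⟨Mα, hMαdef⟩ : ∃ M : Matrix (Fin 3) (Fin 3) ℝ, M = 1 - (α / n ^ 2) • Q := ⟨_, rfl⟩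
  obtain ⟨Mβ, hMβdef⟩ : ∃ M : Matrix (Fin 3) (Fin 3) ℝ, M = 1 - (β / n ^ 2) • Q := ⟨_, rfl⟩
  have hMprod : ∀ a b : ℝ, ((1 : Matrix (Fin 3) (Fin 3) ℝ) - a • Q) * (1 - b • Q)
      = 1 - ((a + b) - a * b * n ^ 2) • Q := by
    intro a b
    simp only [Matrix.mul_sub, Matrix.sub_mul, Matrix.one_mul, Matrix.mul_one,
      Matrix.smul_mul, Matrix.mul_smul]
    rw [hQQ]
    module
  have hzero : α + β - α * β = 0 := by linear_combination -hab
  have hcoef : ∀ a b : ℝ, a + b - a * b = 0 →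
      (a / n ^ 2 + b / n ^ 2) - (a / n ^ 2) * (b / n ^ 2) * n ^ 2 = 0 := by
    intro a b h
    have hr : (a / n ^ 2 + b / n ^ 2) - (a / n ^ 2) * (b / n ^ 2) * n ^ 2
        = (a + b - a * b) / n ^ 2 := by
      field_simp
    rw [hr, h, zero_div]
  have hMαβ : Mα * Mβ = 1 := by
    rw [hMαdef, hMβdef, hMprod, hcoef α β hzero, zero_smul, sub_zero]
  have hMβα : Mβ * Mα = 1 := by
    rw [hMαdef, hMβdef, hMprod, hcoef β α (by linarith [hzero]), zero_smul, sub_zero]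
  have hdet : ∀ t : ℝ, ((1 : Matrix (Fin 3) (Fin 3) ℝ) - t • Q).det = 1 - t * n ^ 2 := by
    intro t
    rw [Matrix.det_fin_three]
    simp only [Matrix.sub_apply, Matrix.smul_apply, Matrix.one_apply, Matrix.vecMulVec_apply,
      smul_eq_mul, hQ]
    norm_num [Fin.ext_iff]
    linear_combination (-t) * hsum
  have hMαT : Mαᵀ = Mα := by
    rw [hMαdef, Matrix.transpose_sub, Matrix.transpose_one, Matrix.transpose_smul, hQT]
  have hMβT : Mβᵀ = Mβ := by
    rw [hMβdef, Matrix.transpose_sub, Matrix.transpose_one, Matrix.transpose_smul, hQT]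
  -- Jacobians
  have hJFx : JF x = s • Mα := by
    rw [aux_jac (r₂ ^ α) α F hF JF hJF x hxne, hs, hMαdef, hQ, hu, hndef]
  have hJGy : JG (F x) = s' • Mβ := by
    rw [aux_jac (r₃ ^ β) β G hG JG hJG (F x) hFne]
    have hvv : Matrix.vecMulVec (⇑(F x)) (⇑(F x)) = (s ^ 2) • Q := by
      rw [hFx, hQ, hu]
      ext i j
      simp only [Matrix.vecMulVec_apply, Matrix.smul_apply, smul_eq_mul,
        PiLp.smul_apply, Pi.smul_apply]
      ring
    have hc2 : β / ‖F x‖ ^ 2 * s ^ 2 = β / n ^ 2 := by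
      rw [hFnorm, mul_pow]
      field_simp
    rw [hvv, smul_smul, hc2, ← hs', ← hMβdef]
  have hdetMα : Mα.det = 1 - α := by
    rw [hMαdef, hdet]; field_simp
  have hdetMβ : Mβ.det = 1 - β := by
    rw [hMβdef, hdet]; field_simp
  have hdetJF : (s • Mα).det = s ^ 3 * (1 - α) := by
    rw [Matrix.det_smul, hdetMα]; norm_num
  have hdetJG : (s' • Mβ).det = s' ^ 3 * (1 - β) := by
    rw [Matrix.det_smul, hdetMβ]; norm_num
  have h1α : (1:ℝ) - α ≠ 0 := by intro h; nlinarith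
  have h1β : (1:ℝ) - β ≠ 0 := by intro h; nlinarith
  have h1ab : ((1:ℝ) - α) * (1 - β) = 1 := by linear_combination hab
  have hMMM : Mβ * (Mα * Mα) * Mβ = 1 := by
    rw [← mul_assoc Mβ Mα Mα, hMβα, one_mul, hMαβ]
  have key : ((s' • Mβ).det)⁻¹ •
      ((s' • Mβ) * (((s • Mα).det)⁻¹ • ((s • Mα) * (m • (1 : Matrix (Fin 3) (Fin 3) ℝ))
        * (s • Mα)ᵀ)) * (s' • Mβ)ᵀ) = 1 := by
    rw [Matrix.transpose_smul, hMαT, Matrix.transpose_smul, hMβT, hdetJF, hdetJG]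
    simp only [Matrix.smul_mul, Matrix.mul_smul, Matrix.mul_one, smul_smul]
    rw [show Mβ * (Mα * Mα) * Mβ = 1 from hMMM]
    rw [show (s' ^ 3 * (1 - β))⁻¹ * (s' * ((s ^ 3 * (1 - α))⁻¹ * (s * (m * s)) * s')) = 1 by
      field_simp
      linear_combination (-1) * hss' + (-(s*s')) * hab]
    rw [one_smul]
  obtain ⟨he, hmu⟩ := hε x (hndef ▸ hx0) (hndef ▸ hx1)
  refine ⟨hbound, ?_, ?_⟩
  · rw [he, hJFx, hJGy]; exact key
  · rw [hmu, hJFx, hJGy]; exact key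
end

section
/- Let m > 1, r_0 > 0, α, β > 1 with αβ − α − β = 0, and G∘F defined on B_{r_0} by composing F(x) = r_2^α x/|x|^α and G(x) = r_3^β x/|x|^β with r_2 = m r_0, r_3 = m^{2−1/α} r_0. Then G(F(x)) = m x for all x ∈ B_{r_0} \ {0}; i.e., the composition is the dilation by factor m. -/
/-- The composition `G ∘ F` of the two Kelvin-type transforms is the dilation by `m`
on `B_{r₀} \ {0}`. -/
theorem stmt_17 (m r₀ α β r₂ r₃ : ℝ) (hm : 1 < m) (hr₀ : 0 < r₀)
    (hα : 1 < α) (hβ : 1 < β) (hab : α * β - α - β = 0)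
    (h2 : r₂ = m * r₀) (h3 : r₃ = m ^ (2 - 1/α) * r₀)
    (F G : EuclideanSpace ℝ (Fin 3) → EuclideanSpace ℝ (Fin 3))
    (hF : ∀ x : EuclideanSpace ℝ (Fin 3), x ≠ 0 → F x = (r₂ ^ α / ‖x‖ ^ α) • x)
    (hG : ∀ y : EuclideanSpace ℝ (Fin 3), y ≠ 0 → G y = (r₃ ^ β / ‖y‖ ^ β) • y) :
    ∀ x : EuclideanSpace ℝ (Fin 3), x ≠ 0 → ‖x‖ < r₀ → G (F x) = m • x := by
  intro x hx _
  have hm0 : (0:ℝ) < m := lt_trans one_pos hm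
  have hα0 : α ≠ 0 := ne_of_gt (lt_trans one_pos hα)
  have hn : (0:ℝ) < ‖x‖ := norm_pos_iff.mpr hx
  have hr2 : (0:ℝ) < r₂ := by rw [h2]; positivity
  have hr3 : (0:ℝ) < r₃ := by
    rw [h3]; exact mul_pos (Real.rpow_pos_of_pos hm0 _) hr₀
  set c : ℝ := r₂ ^ α / ‖x‖ ^ α with hc_def
  have hc : 0 < c := div_pos (Real.rpow_pos_of_pos hr2 _) (Real.rpow_pos_of_pos hn _)
  have hFx : F x = c • x := hF x hx
  have hFx0 : F x ≠ 0 := by rw [hFx]; exact smul_ne_zero (ne_of_gt hc) hx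
  rw [hG _ hFx0, hFx, smul_smul]
  congr 1
  have hnorm : ‖c • x‖ = c * ‖x‖ := by
    rw [norm_smul, Real.norm_eq_abs, abs_of_pos hc]
  rw [hnorm]
  -- key scalar computation
  have hcb : c ^ β = r₂ ^ (α * β) / ‖x‖ ^ (α * β) := by
    rw [hc_def, Real.div_rpow (Real.rpow_nonneg hr2.le _) (Real.rpow_nonneg hn.le _),
      ← Real.rpow_mul hr2.le, ← Real.rpow_mul hn.le]
  have hab' : α * β = α + β := by linarith
  have hmul : (c * ‖x‖) ^ β = c ^ β * ‖x‖ ^ β :=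
    Real.mul_rpow hc.le hn.le
  have hr3b : r₃ ^ β = m ^ ((2 - 1/α) * β) * r₀ ^ β := by
    rw [h3, Real.mul_rpow (Real.rpow_nonneg hm0.le _) hr₀.le, ← Real.rpow_mul hm0.le]
  have hr2b : r₂ ^ β = m ^ β * r₀ ^ β := by
    rw [h2, Real.mul_rpow hm0.le hr₀.le]
  have hexp : (2 - 1/α) * β = β + 1 := by
    field_simp
    nlinarith [hab]
  have hmexp : m ^ ((2 - 1/α) * β) = m ^ β * m := by
    rw [hexp, Real.rpow_add hm0, Real.rpow_one]
  have hab2 : r₂ ^ (α * β) = r₂ ^ α * r₂ ^ β := by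
    rw [hab', Real.rpow_add hr2]
  have hnab : ‖x‖ ^ (α * β) = ‖x‖ ^ α * ‖x‖ ^ β := by
    rw [hab', Real.rpow_add hn]
  have hcpos := Real.rpow_pos_of_pos hr2 α
  have hnpos := Real.rpow_pos_of_pos hn α
  have hnbpos := Real.rpow_pos_of_pos hn β
  have hr2bpos := Real.rpow_pos_of_pos hr2 β
  have hr0bpos := Real.rpow_pos_of_pos hr₀ β
  have hmbpos := Real.rpow_pos_of_pos hm0 β
  rw [hmul, hcb, hr3b, hmexp, hab2, hnab, hc_def, hr2b]
  field_simp
end
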